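/- The Sparsity Resilient canonicalization C_SRRD(R)(s,a,s') = R(s,a,s') + E[γR(s',A,S₁) − R(s,A,S₂) − γR(S₃,A,S₄) + γ²R(S₁,A,S₅) − γR(S₂,A,S₆) + γR(S₃,A,S₆) − γ²R(S₄,A,S₅)] is invariant to potential shaping: for any φ : S → ℝ and R'(s,a,s') = R(s,a,s') + γφ(s') − φ(s), C_SRRD(R') = C_SRRD(R). -/
import Mathlib


/-- The Sparsity Resilient canonicalization `C_SRRD` is invariant to
potential shaping. -/
theorem stmt6 {St Ac Ω : Type*} [Fintype Ω]
    (R : St → Ac → St → ℝ) (φ : St → ℝ) (γ : ℝ) (hγ0 : 0 ≤ γ) (hγ1 : γ ≤ 1)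
    (p : Ω → ℝ) (hp0 : ∀ ω, 0 ≤ p ω) (hp1 : ∑ ω, p ω = 1)
    (Av : Ω → Ac) (S1 S2 S3 S4 S5 S6 : Ω → St) :
    let E := fun (f : Ω → ℝ) => ∑ ω, p ω * f ω
    let CSRRD := fun (Q : St → Ac → St → ℝ) (s : St) (a : Ac) (s' : St) =>
      Q s a s' + E (fun ω =>
        γ * Q s' (Av ω) (S1 ω) - Q s (Av ω) (S2 ω) - γ * Q (S3 ω) (Av ω) (S4 ω)
        + γ ^ 2 * Q (S1 ω) (Av ω) (S5 ω) - γ * Q (S2 ω) (Av ω) (S6 ω)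
        + γ * Q (S3 ω) (Av ω) (S6 ω) - γ ^ 2 * Q (S4 ω) (Av ω) (S5 ω))
    CSRRD (fun u b w => R u b w + γ * φ w - φ u) = CSRRD R := by
  intro E CSRRD
  funext s a s'
  simp only [CSRRD, E]
  have h : ∀ ω, (γ * ((R s' (Av ω) (S1 ω) + γ * φ (S1 ω) - φ s')) -
      (R s (Av ω) (S2 ω) + γ * φ (S2 ω) - φ s) -
      γ * (R (S3 ω) (Av ω) (S4 ω) + γ * φ (S4 ω) - φ (S3 ω)) +
      γ ^ 2 * (R (S1 ω) (Av ω) (S5 ω) + γ * φ (S5 ω) - φ (S1 ω)) -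
      γ * (R (S2 ω) (Av ω) (S6 ω) + γ * φ (S6 ω) - φ (S2 ω)) +
      γ * (R (S3 ω) (Av ω) (S6 ω) + γ * φ (S6 ω) - φ (S3 ω)) -
      γ ^ 2 * (R (S4 ω) (Av ω) (S5 ω) + γ * φ (S5 ω) - φ (S4 ω))) =
      (γ * R s' (Av ω) (S1 ω) - R s (Av ω) (S2 ω) - γ * R (S3 ω) (Av ω) (S4 ω)
      + γ ^ 2 * R (S1 ω) (Av ω) (S5 ω) - γ * R (S2 ω) (Av ω) (S6 ω)
      + γ * R (S3 ω) (Av ω) (S6 ω) - γ ^ 2 * R (S4 ω) (Av ω) (S5 ω))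
      + (φ s - γ * φ s') := by
    intro ω; ring
  have hsum : (∑ ω, p ω * (γ * ((R s' (Av ω) (S1 ω) + γ * φ (S1 ω) - φ s')) -
      (R s (Av ω) (S2 ω) + γ * φ (S2 ω) - φ s) -
      γ * (R (S3 ω) (Av ω) (S4 ω) + γ * φ (S4 ω) - φ (S3 ω)) +
      γ ^ 2 * (R (S1 ω) (Av ω) (S5 ω) + γ * φ (S5 ω) - φ (S1 ω)) -
      γ * (R (S2 ω) (Av ω) (S6 ω) + γ * φ (S6 ω) - φ (S2 ω)) +
      γ * (R (S3 ω) (Av ω) (S6 ω) + γ * φ (S6 ω) - φ (S3 ω)) -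
      γ ^ 2 * (R (S4 ω) (Av ω) (S5 ω) + γ * φ (S5 ω) - φ (S4 ω)))) =
      (∑ ω, p ω * (γ * R s' (Av ω) (S1 ω) - R s (Av ω) (S2 ω)
      - γ * R (S3 ω) (Av ω) (S4 ω)
      + γ ^ 2 * R (S1 ω) (Av ω) (S5 ω) - γ * R (S2 ω) (Av ω) (S6 ω)
      + γ * R (S3 ω) (Av ω) (S6 ω) - γ ^ 2 * R (S4 ω) (Av ω) (S5 ω)))
      + (φ s - γ * φ s') := by
    simp only [h, mul_add, Finset.sum_add_distrib, ← Finset.sum_mul, hp1, one_mul]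
  rw [hsum]; ring
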